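/- Let E be a Banach space with an atomic decomposition ({x_j'}, {x_j}) that is boundedly complete, i.e. ∑_j x''(x_j') x_j converges in E for every x'' ∈ E''. Then E is complemented in its bidual E''; in fact, the map P : E'' → E, P(x'') := ∑_j x''(x_j') x_j, is a continuous linear projection onto E (identifying E with its canonical image in E''). -/

import Mathlib

open Filter Topology

/-- If a Banach space `E` has a boundedly complete atomic decomposition `({x_j'}, {x_j})`,
then `P(x'') := ∑_j x''(x_j') x_j` defines a continuous linear map `E'' → E` which is a
left inverse of the canonical embedding; hence `E` is complemented in its bidual. -/
theorem stmt8 {E : Type*} [NormedAddCommGroup E] [NormedSpace ℝ E] [CompleteSpace E]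
    (f : ℕ → E →L[ℝ] ℝ) (v : ℕ → E)
    (had : ∀ x : E, Tendsto (fun n => ∑ j ∈ Finset.range n, f j x • v j) atTop (𝓝 x))
    (hbc : ∀ x'' : (E →L[ℝ] ℝ) →L[ℝ] ℝ,
      ∃ s : E, Tendsto (fun n => ∑ j ∈ Finset.range n, x'' (f j) • v j) atTop (𝓝 s)) :
    ∃ P : ((E →L[ℝ] ℝ) →L[ℝ] ℝ) →L[ℝ] E,
      (∀ x'' : (E →L[ℝ] ℝ) →L[ℝ] ℝ,
        Tendsto (fun n => ∑ j ∈ Finset.range n, x'' (f j) • v j) atTop (𝓝 (P x''))) ∧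
      ∀ x : E, P (NormedSpace.inclusionInDoubleDual ℝ E x) = x := by
  -- partial sum operators on the bidual
  obtain ⟨g, hgapp⟩ : ∃ g : ℕ → (@ContinuousLinearMap ℝ ℝ _ _ (RingHom.id ℝ) ((E →L[ℝ] ℝ) →L[ℝ] ℝ)
      (@UniformSpace.toTopologicalSpace _ (@PseudoMetricSpace.toUniformSpace _
        (@SeminormedAddCommGroup.toPseudoMetricSpace _ ContinuousLinearMap.toSeminormedAddCommGroup)))
      (@AddCommGroup.toAddCommMonoid _
        (@SeminormedAddCommGroup.toAddCommGroup _ ContinuousLinearMap.toSeminormedAddCommGroup)) E _ _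
      (@NormedSpace.toModule ℝ ((E →L[ℝ] ℝ) →L[ℝ] ℝ) _ ContinuousLinearMap.toSeminormedAddCommGroup _) _),
      ∀ n x'', g n x'' = ∑ j ∈ Finset.range n, x'' (f j) • v j := by
    refine ⟨fun n => ∑ j ∈ Finset.range n,
      ((NormedSpace.inclusionInDoubleDual ℝ (E →L[ℝ] ℝ)) (f j)).smulRight (v j), ?_⟩
    intro n x''
    simp [ContinuousLinearMap.sum_apply, NormedSpace.inclusionInDoubleDual]
  -- the pointwise limit
  choose F0 hF0t using hbc
  have hgt : ∀ x'', Tendsto (fun n => g n x'') atTop (𝓝 (F0 x'')) := by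
    intro x''
    simpa [hgapp] using hF0t x''
  have htend : Tendsto (fun n x'' => g n x'') atTop (𝓝 F0) := by
    rw [tendsto_pi_nhds]; exact hgt
  -- uniform bound via Banach–Steinhaus
  obtain ⟨C, hC⟩ : ∃ C, ∀ n, ‖g n‖ ≤ C := by
    apply banach_steinhaus
    intro x''
    obtain ⟨C, hC⟩ := ((hgt x'').norm.bddAbove_range)
    exact ⟨C, fun n => hC (Set.mem_range_self n)⟩
  -- the limit as a linear map
  set L : ((E →L[ℝ] ℝ) →L[ℝ] ℝ) →ₗ[ℝ] E :=
    linearMapOfTendsto F0 (fun n => (g n : _ →ₗ[ℝ] _)) htend with hL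
  have hbound : ∀ x'', ‖L x''‖ ≤ C * ‖x''‖ := by
    intro x''
    have hLx : L x'' = F0 x'' := rfl
    rw [hLx]
    refine le_of_tendsto (hgt x'').norm (Eventually.of_forall fun n => ?_)
    exact ((g n).le_opNorm x'').trans
      (mul_le_mul_of_nonneg_right (hC n) (norm_nonneg x''))
  refine ⟨@LinearMap.mkContinuous ℝ ℝ ((E →L[ℝ] ℝ) →L[ℝ] ℝ) E _ _
    ContinuousLinearMap.toSeminormedAddCommGroup _ ContinuousLinearMap.module _ (RingHom.id ℝ)
    L C hbound, ?_, ?_⟩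
  · intro x''
    exact hF0t x''
  · intro x
    have h1 : Tendsto (fun n => ∑ j ∈ Finset.range n, f j x • v j) atTop
        (𝓝 (F0 (NormedSpace.inclusionInDoubleDual ℝ E x))) := by
      simpa using hF0t (NormedSpace.inclusionInDoubleDual ℝ E x)
    exact tendsto_nhds_unique h1 (had x)
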